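/- Suppose a + 2b ≠ 0 and 2a + b ≠ 0 (nontrivial-center case excluded). Then the function G = y_1^{2a+b} / x_3^{a+2b} (interpreted for integer exponents, or as (2a+b)·log y_1 − (a+2b)·log x_3 in general) is an invariant of the coadjoint representation of d_5^{a,b}, and {F_1, G} with F_1 = (2x_0 y_1 + x_2^2 − 2x_1 x_3)^3/(x_3^2 y_1^2) forms a fundamental set of two functionally independent invariants. -/

import Mathlib

/-- Structure constants (listed direction) of `d_5^{a,b}`; basis
`X_0 ↦ 0, …, X_3 ↦ 3, Y_1 ↦ 4, V ↦ 5`. -/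
noncomputable def strAB (a b : ℂ) (i j s : ℕ) : ℂ :=
  (if i = 0 ∧ (j = 1 ∨ j = 2) ∧ s = j + 1 then 1 else 0) +
  (if i = 1 ∧ j = 2 ∧ s = 4 then 1 else 0) +
  (if i = 5 ∧ j = 0 ∧ s = 0 then a else 0) +
  (if i = 5 ∧ j = 1 ∧ s = 1 then b else 0) +
  (if i = 5 ∧ j = 2 ∧ s = 2 then a + b else 0) +
  (if i = 5 ∧ j = 3 ∧ s = 3 then 2 * a + b else 0) +
  (if i = 5 ∧ j = 4 ∧ s = 4 then a + 2 * b else 0)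

/-- Antisymmetrized structure constants of `d_5^{a,b}`. -/
noncomputable def CAB (a b : ℂ) (i j s : ℕ) : ℂ := strAB a b i j s - strAB a b j i s

/-- Partial derivative `∂F/∂x_j` in coordinates. -/
noncomputable def pd (j : ℕ) (F : (ℕ → ℂ) → ℂ) (p : ℕ → ℂ) : ℂ :=
  deriv (fun t => F (Function.update p j t)) (p j)

/-- The coadjoint operator `X̂_i = −C_{ij}^k x_k ∂_{x_j}` of `d_5^{a,b}`. -/
noncomputable def opAB (a b : ℂ) (i : ℕ) (F : (ℕ → ℂ) → ℂ) (p : ℕ → ℂ) : ℂ :=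
  ∑ j ∈ Finset.range 6, (-(∑ k ∈ Finset.range 6, CAB a b i j k * p k)) * pd j F p

/-- The rational function `F_1 = (2x_0y_1 + x_2² − 2x_1x_3)³/(x_3²y_1²)`. -/
noncomputable def F1 (p : ℕ → ℂ) : ℂ :=
  (2 * p 0 * p 4 + (p 2) ^ 2 - 2 * p 1 * p 3) ^ 3 / ((p 3) ^ 2 * (p 4) ^ 2)

/-- The invariant `G = y_1^{2a+b}/x_3^{a+2b}`, in its general (logarithmic) form
`G = (2a+b)·log y_1 − (a+2b)·log x_3`. -/
noncomputable def G (a b : ℂ) (p : ℕ → ℂ) : ℂ :=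
  (2 * a + b) * Complex.log (p 4) - (a + 2 * b) * Complex.log (p 3)

section InvariantsAux

lemma pd_const (j : ℕ) (F : (ℕ → ℂ) → ℂ) (p : ℕ → ℂ)
    (h : ∀ t, F (Function.update p j t) = F p) : pd j F p = 0 := by
  unfold pd
  rw [funext h]
  exact deriv_const _ _

lemma pd_G_ne (a b : ℂ) (p : ℕ → ℂ) (j : ℕ) (h3 : j ≠ 3) (h4 : j ≠ 4) :
    pd j (G a b) p = 0 :=
  pd_const _ _ _ fun t => by
    simp [G, Function.update_apply, Ne.symm h3, Ne.symm h4]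

lemma pd_G_3 (a b : ℂ) (p : ℕ → ℂ) (h : p 3 ∈ Complex.slitPlane) :
    pd 3 (G a b) p = -((a + 2 * b) / p 3) := by
  unfold pd
  have hf : (fun t => G a b (Function.update p 3 t)) =
      fun t => (2 * a + b) * Complex.log (p 4) - (a + 2 * b) * Complex.log t := by
    funext t; simp [G, Function.update_apply]
  rw [hf]
  have h1 : HasDerivAt (fun t : ℂ => (2 * a + b) * Complex.log (p 4) - (a + 2 * b) * Complex.log t)
      (0 - (a + 2 * b) * (p 3)⁻¹) (p 3) :=
    (hasDerivAt_const _ _).sub ((Complex.hasDerivAt_log h).const_mul _)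
  rw [h1.deriv]
  field_simp
  ring

lemma pd_G_4 (a b : ℂ) (p : ℕ → ℂ) (h : p 4 ∈ Complex.slitPlane) :
    pd 4 (G a b) p = (2 * a + b) / p 4 := by
  unfold pd
  have hf : (fun t => G a b (Function.update p 4 t)) =
      fun t => (2 * a + b) * Complex.log t - (a + 2 * b) * Complex.log (p 3) := by
    funext t; simp [G, Function.update_apply]
  rw [hf]
  have h1 : HasDerivAt (fun t : ℂ => (2 * a + b) * Complex.log t - (a + 2 * b) * Complex.log (p 3))
      ((2 * a + b) * (p 4)⁻¹ - 0) (p 4) :=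
    ((Complex.hasDerivAt_log h).const_mul _).sub (hasDerivAt_const _ _)
  rw [h1.deriv]
  field_simp
  ring

lemma pd_F1_0 (p : ℕ → ℂ) (h3 : p 3 ≠ 0) (h4 : p 4 ≠ 0) :
    pd 0 F1 p = 6 * p 3 * p 4 ^ 2 * (2 * p 0 * p 4 + (p 2) ^ 2 - 2 * p 1 * p 3) ^ 2
      / ((p 3) ^ 3 * (p 4) ^ 3) := by
  unfold pd
  have hf : (fun t => F1 (Function.update p 0 t)) =
      fun t => (2 * t * p 4 + (p 2) ^ 2 - 2 * p 1 * p 3) ^ 3 / ((p 3) ^ 2 * (p 4) ^ 2) := by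
    funext t; simp [F1, Function.update_apply]
  rw [hf]
  have hg : HasDerivAt (fun t : ℂ => 2 * t * p 4 + (p 2) ^ 2 - 2 * p 1 * p 3)
      (2 * 1 * p 4) (p 0) := by
    simpa using (((hasDerivAt_id (p 0)).const_mul (2 : ℂ)).mul_const (p 4)).add_const
      ((p 2) ^ 2) |>.sub_const (2 * p 1 * p 3)
  have h := (hg.fun_pow 3).div_const ((p 3) ^ 2 * (p 4) ^ 2)
  rw [h.deriv, div_eq_div_iff (mul_ne_zero (pow_ne_zero _ h3) (pow_ne_zero _ h4))
    (mul_ne_zero (pow_ne_zero _ h3) (pow_ne_zero _ h4))]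
  push_cast
  ring

lemma pd_F1_1 (p : ℕ → ℂ) (h3 : p 3 ≠ 0) (h4 : p 4 ≠ 0) :
    pd 1 F1 p = (-(6 * p 3 ^ 2 * p 4 * (2 * p 0 * p 4 + (p 2) ^ 2 - 2 * p 1 * p 3) ^ 2))
      / ((p 3) ^ 3 * (p 4) ^ 3) := by
  unfold pd
  have hf : (fun t => F1 (Function.update p 1 t)) =
      fun t => (2 * p 0 * p 4 + (p 2) ^ 2 - 2 * t * p 3) ^ 3 / ((p 3) ^ 2 * (p 4) ^ 2) := by
    funext t; simp [F1, Function.update_apply]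
  rw [hf]
  have hg : HasDerivAt (fun t : ℂ => 2 * p 0 * p 4 + (p 2) ^ 2 - 2 * t * p 3)
      (-(2 * 1 * p 3)) (p 1) := by
    simpa using HasDerivAt.const_sub (2 * p 0 * p 4 + (p 2) ^ 2)
      (((hasDerivAt_id (p 1)).const_mul (2 : ℂ)).mul_const (p 3))
  have h := (hg.fun_pow 3).div_const ((p 3) ^ 2 * (p 4) ^ 2)
  rw [h.deriv, div_eq_div_iff (mul_ne_zero (pow_ne_zero _ h3) (pow_ne_zero _ h4))
    (mul_ne_zero (pow_ne_zero _ h3) (pow_ne_zero _ h4))]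
  push_cast
  ring

lemma pd_F1_2 (p : ℕ → ℂ) (h3 : p 3 ≠ 0) (h4 : p 4 ≠ 0) :
    pd 2 F1 p = 6 * p 2 * p 3 * p 4 * (2 * p 0 * p 4 + (p 2) ^ 2 - 2 * p 1 * p 3) ^ 2
      / ((p 3) ^ 3 * (p 4) ^ 3) := by
  unfold pd
  have hf : (fun t => F1 (Function.update p 2 t)) =
      fun t => (2 * p 0 * p 4 + t ^ 2 - 2 * p 1 * p 3) ^ 3 / ((p 3) ^ 2 * (p 4) ^ 2) := by
    funext t; simp [F1, Function.update_apply]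
  rw [hf]
  have hg : HasDerivAt (fun t : ℂ => 2 * p 0 * p 4 + t ^ 2 - 2 * p 1 * p 3)
      (2 * p 2) (p 2) := by
    simpa using ((hasDerivAt_pow 2 (p 2)).const_add (2 * p 0 * p 4)).sub_const (2 * p 1 * p 3)
  have h := (hg.fun_pow 3).div_const ((p 3) ^ 2 * (p 4) ^ 2)
  rw [h.deriv, div_eq_div_iff (mul_ne_zero (pow_ne_zero _ h3) (pow_ne_zero _ h4))
    (mul_ne_zero (pow_ne_zero _ h3) (pow_ne_zero _ h4))]
  push_cast
  ring

lemma pd_F1_3 (p : ℕ → ℂ) (h3 : p 3 ≠ 0) (h4 : p 4 ≠ 0) :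
    pd 3 F1 p = (-(6 * p 1 * p 3 * p 4 * (2 * p 0 * p 4 + (p 2) ^ 2 - 2 * p 1 * p 3) ^ 2)
        - 2 * p 4 * (2 * p 0 * p 4 + (p 2) ^ 2 - 2 * p 1 * p 3) ^ 3)
      / ((p 3) ^ 3 * (p 4) ^ 3) := by
  unfold pd
  have hf : (fun t => F1 (Function.update p 3 t)) =
      fun t => (2 * p 0 * p 4 + (p 2) ^ 2 - 2 * p 1 * t) ^ 3 / (t ^ 2 * (p 4) ^ 2) := by
    funext t; simp [F1, Function.update_apply]
  rw [hf]
  have hn : HasDerivAt (fun t : ℂ => (2 * p 0 * p 4 + (p 2) ^ 2 - 2 * p 1 * t) ^ 3)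
      ((3 : ℕ) * (2 * p 0 * p 4 + (p 2) ^ 2 - 2 * p 1 * p 3) ^ 2 * (-(2 * p 1 * 1))) (p 3) := by
    have h0 : HasDerivAt (fun t : ℂ => 2 * p 0 * p 4 + (p 2) ^ 2 - 2 * p 1 * t)
        (-(2 * p 1 * 1)) (p 3) := by
      simpa using HasDerivAt.const_sub (2 * p 0 * p 4 + (p 2) ^ 2)
        ((hasDerivAt_id (p 3)).const_mul (2 * p 1))
    simpa using h0.fun_pow 3
  have hd : HasDerivAt (fun t : ℂ => t ^ 2 * (p 4) ^ 2)
      ((2 : ℕ) * p 3 ^ 1 * (p 4) ^ 2) (p 3) :=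
    (hasDerivAt_pow 2 (p 3)).mul_const _
  have h := hn.fun_div hd (mul_ne_zero (pow_ne_zero _ h3) (pow_ne_zero _ h4))
  rw [h.deriv, div_eq_div_iff
    (pow_ne_zero _ (mul_ne_zero (pow_ne_zero _ h3) (pow_ne_zero _ h4)))
    (mul_ne_zero (pow_ne_zero _ h3) (pow_ne_zero _ h4))]
  push_cast
  ring

lemma pd_F1_4 (p : ℕ → ℂ) (h3 : p 3 ≠ 0) (h4 : p 4 ≠ 0) :
    pd 4 F1 p = (6 * p 0 * p 3 * p 4 * (2 * p 0 * p 4 + (p 2) ^ 2 - 2 * p 1 * p 3) ^ 2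
        - 2 * p 3 * (2 * p 0 * p 4 + (p 2) ^ 2 - 2 * p 1 * p 3) ^ 3)
      / ((p 3) ^ 3 * (p 4) ^ 3) := by
  unfold pd
  have hf : (fun t => F1 (Function.update p 4 t)) =
      fun t => (2 * p 0 * t + (p 2) ^ 2 - 2 * p 1 * p 3) ^ 3 / ((p 3) ^ 2 * t ^ 2) := by
    funext t; simp [F1, Function.update_apply]
  rw [hf]
  have hn : HasDerivAt (fun t : ℂ => (2 * p 0 * t + (p 2) ^ 2 - 2 * p 1 * p 3) ^ 3)
      ((3 : ℕ) * (2 * p 0 * p 4 + (p 2) ^ 2 - 2 * p 1 * p 3) ^ 2 * (2 * p 0 * 1)) (p 4) := by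
    have h0 : HasDerivAt (fun t : ℂ => 2 * p 0 * t + (p 2) ^ 2 - 2 * p 1 * p 3)
        (2 * p 0 * 1) (p 4) := by
      simpa using (((hasDerivAt_id (p 4)).const_mul (2 * p 0)).add_const
        ((p 2) ^ 2)).sub_const (2 * p 1 * p 3)
    simpa using h0.fun_pow 3
  have hd : HasDerivAt (fun t : ℂ => (p 3) ^ 2 * t ^ 2)
      ((p 3) ^ 2 * ((2 : ℕ) * p 4 ^ 1)) (p 4) :=
    HasDerivAt.const_mul _ (hasDerivAt_pow 2 (p 4))
  have h := hn.fun_div hd (mul_ne_zero (pow_ne_zero _ h3) (pow_ne_zero _ h4))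
  rw [h.deriv, div_eq_div_iff
    (pow_ne_zero _ (mul_ne_zero (pow_ne_zero _ h3) (pow_ne_zero _ h4)))
    (mul_ne_zero (pow_ne_zero _ h3) (pow_ne_zero _ h4))]
  push_cast
  ring

lemma pd_F1_5 (p : ℕ → ℂ) : pd 5 F1 p = 0 :=
  pd_const _ _ _ fun t => by simp [F1, Function.update_apply]

lemma op0 (a b : ℂ) (F : (ℕ → ℂ) → ℂ) (p : ℕ → ℂ) :
    opAB a b 0 F p = -(p 2) * pd 1 F p - p 3 * pd 2 F p + a * p 0 * pd 5 F p := by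
  norm_num [opAB, CAB, strAB, Finset.sum_range_succ]; try ring

lemma op1 (a b : ℂ) (F : (ℕ → ℂ) → ℂ) (p : ℕ → ℂ) :
    opAB a b 1 F p = p 2 * pd 0 F p - p 4 * pd 2 F p + b * p 1 * pd 5 F p := by
  norm_num [opAB, CAB, strAB, Finset.sum_range_succ]; try ring

lemma op2 (a b : ℂ) (F : (ℕ → ℂ) → ℂ) (p : ℕ → ℂ) :
    opAB a b 2 F p = p 3 * pd 0 F p + p 4 * pd 1 F p + (a + b) * p 2 * pd 5 F p := by
  norm_num [opAB, CAB, strAB, Finset.sum_range_succ]; try ring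

lemma op3 (a b : ℂ) (F : (ℕ → ℂ) → ℂ) (p : ℕ → ℂ) :
    opAB a b 3 F p = (2 * a + b) * p 3 * pd 5 F p := by
  norm_num [opAB, CAB, strAB, Finset.sum_range_succ]; try ring

lemma op4 (a b : ℂ) (F : (ℕ → ℂ) → ℂ) (p : ℕ → ℂ) :
    opAB a b 4 F p = (a + 2 * b) * p 4 * pd 5 F p := by
  norm_num [opAB, CAB, strAB, Finset.sum_range_succ]; try ring

lemma op5 (a b : ℂ) (F : (ℕ → ℂ) → ℂ) (p : ℕ → ℂ) :
    opAB a b 5 F p = -(a * p 0) * pd 0 F p - b * p 1 * pd 1 F p - (a + b) * p 2 * pd 2 F p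
      - (2 * a + b) * p 3 * pd 3 F p - (a + 2 * b) * p 4 * pd 4 F p := by
  norm_num [opAB, CAB, strAB, Finset.sum_range_succ]; try ring

end InvariantsAux

/-- In the trivial-center case `a + 2b ≠ 0` and `2a + b ≠ 0`, the function
`G = y_1^{2a+b}/x_3^{a+2b}` (logarithmic form) is an invariant of the coadjoint
representation of `d_5^{a,b}`, and `{F_1, G}` is a fundamental set of two
functionally independent invariants. -/
theorem invariants_d5ab_trivial_center (a b : ℂ)
    (h1 : a + 2 * b ≠ 0) (h2 : 2 * a + b ≠ 0) :
    (∀ p : ℕ → ℂ, p 3 ∈ Complex.slitPlane → p 4 ∈ Complex.slitPlane → ∀ i < 6,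
      opAB a b i (G a b) p = 0 ∧ opAB a b i F1 p = 0) ∧
    (∃ p : ℕ → ℂ, p 3 ∈ Complex.slitPlane ∧ p 4 ∈ Complex.slitPlane ∧
      LinearIndependent ℂ
        ![fun j : Fin 6 => pd j.1 F1 p, fun j : Fin 6 => pd j.1 (G a b) p]) := by
  constructor
  · intro p hp3 hp4 i hi
    have h3 : p 3 ≠ 0 := Complex.slitPlane_ne_zero hp3
    have h4 : p 4 ≠ 0 := Complex.slitPlane_ne_zero hp4
    have e0 : pd 0 (G a b) p = 0 := pd_G_ne a b p 0 (by norm_num) (by norm_num)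
    have e1 : pd 1 (G a b) p = 0 := pd_G_ne a b p 1 (by norm_num) (by norm_num)
    have e2 : pd 2 (G a b) p = 0 := pd_G_ne a b p 2 (by norm_num) (by norm_num)
    have e5 : pd 5 (G a b) p = 0 := pd_G_ne a b p 5 (by norm_num) (by norm_num)
    have e3 := pd_G_3 a b p hp3
    have e4 := pd_G_4 a b p hp4
    have f0 := pd_F1_0 p h3 h4
    have f1 := pd_F1_1 p h3 h4
    have f2 := pd_F1_2 p h3 h4
    have f3 := pd_F1_3 p h3 h4
    have f4 := pd_F1_4 p h3 h4
    have f5 := pd_F1_5 p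
    interval_cases i
    · refine ⟨by rw [op0, e1, e2, e5]; ring, ?_⟩
      rw [op0, f1, f2, f5]
      simp only [mul_zero, add_zero, ← mul_div_assoc, ← add_div, div_sub_div_same]
      rw [div_eq_zero_iff]
      exact Or.inl (by ring)
    · refine ⟨by rw [op1, e0, e2, e5]; ring, ?_⟩
      rw [op1, f0, f2, f5]
      simp only [mul_zero, add_zero, ← mul_div_assoc, ← add_div, div_sub_div_same]
      rw [div_eq_zero_iff]
      exact Or.inl (by ring)
    · refine ⟨by rw [op2, e0, e1, e5]; ring, ?_⟩
      rw [op2, f0, f1, f5]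
      simp only [mul_zero, add_zero, ← mul_div_assoc, ← add_div, div_sub_div_same]
      rw [div_eq_zero_iff]
      exact Or.inl (by ring)
    · exact ⟨by rw [op3, e5]; ring, by rw [op3, f5]; ring⟩
    · exact ⟨by rw [op4, e5]; ring, by rw [op4, f5]; ring⟩
    · constructor
      · rw [op5, e0, e1, e2, e3, e4]
        field_simp
        ring
      · rw [op5, f0, f1, f2, f3, f4]
        simp only [← mul_div_assoc, ← add_div, div_sub_div_same]
        rw [div_eq_zero_iff]
        exact Or.inl (by ring)
  · refine ⟨fun n => if n = 0 ∨ n = 3 ∨ n = 4 then 1 else 0,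
      by norm_num [Complex.mem_slitPlane_iff],
      by norm_num [Complex.mem_slitPlane_iff], ?_⟩
    set p : ℕ → ℂ := fun n => if n = 0 ∨ n = 3 ∨ n = 4 then 1 else 0 with hp
    rw [LinearIndependent.pair_iff]
    intro s t hst
    have hp0 : p 0 = 1 := by norm_num [hp]
    have hp1 : p 1 = 0 := by norm_num [hp]
    have hp2 : p 2 = 0 := by norm_num [hp]
    have hp3 : p 3 = 1 := by norm_num [hp]
    have hp4 : p 4 = 1 := by norm_num [hp]
    have h3 : p 3 ≠ 0 := by rw [hp3]; norm_num
    have h4 : p 4 ≠ 0 := by rw [hp4]; norm_num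
    have hsl4 : p 4 ∈ Complex.slitPlane := by
      rw [hp4]; norm_num [Complex.mem_slitPlane_iff]
    have h0 := congrFun hst 0
    have hv4 := congrFun hst 4
    have v0 : pd 0 F1 p = 24 := by
      rw [pd_F1_0 p h3 h4, hp0, hp1, hp2, hp3, hp4]; norm_num
    have v4 : pd 4 F1 p = 8 := by
      rw [pd_F1_4 p h3 h4, hp0, hp1, hp2, hp3, hp4]; norm_num
    have w0 : pd 0 (G a b) p = 0 := pd_G_ne a b p 0 (by norm_num) (by norm_num)
    have w4 : pd 4 (G a b) p = 2 * a + b := by rw [pd_G_4 a b p hsl4, hp4]; norm_num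
    simp only [Matrix.cons_val_zero, Matrix.cons_val_one, Matrix.head_cons, Pi.add_apply,
      Pi.smul_apply, smul_eq_mul, Pi.zero_apply] at h0 hv4
    simp only [show ((0 : Fin 6) : ℕ) = 0 from rfl,
      show ((4 : Fin 6) : ℕ) = 4 from rfl] at h0 hv4
    rw [v0, w0] at h0
    rw [v4, w4] at hv4
    have hs : s = 0 := by
      have h24 : s * 24 = 0 := by linear_combination h0
      simpa using h24
    refine ⟨hs, ?_⟩
    rw [hs] at hv4
    simp at hv4
    rcases hv4 with h | h
    · exact h
    · exact absurd h h2
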